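/- Let m ≥ 2, n ≥ 1, γ > 0, and p ≥ max(1, 1/γ). Let B = (B_{ij}) be a deterministic m×n real matrix and let (G'_{ij})_{i≤m, j≤n} be i.i.d. standard Gaussian random variables. Then there exists a constant C > 0 depending only on p and γ such that 𝔼 max_{i≤m} ( Σ_{j=1}^n |B_{ij}|^p · |G'_{ij}|^{pγ} )^{1/p} ≤ C · (log m)^{γ/2} · max_{i≤m} (Σ_{j=1}^n |B_{ij}|^p)^{1/p}. -/

import Mathlib

open MeasureTheory ProbabilityTheory Real
open scoped Pointwise

open scoped ENNReal

noncomputable section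

/-- The `ℓ_r` norm of a vector indexed by a finite type. -/
def pNorm {ι : Type*} [Fintype ι] (r : ℝ) (x : ι → ℝ) : ℝ :=
  (∑ k, |x k| ^ r) ^ (1 / r)

/-- The operator norm of an `m × n` matrix from `ℓ_{p'}^n` to `ℓ_q^m`. -/
def opNorm {m n : ℕ} (p' q : ℝ) (A : Fin m → Fin n → ℝ) : ℝ :=
  sSup {c : ℝ | ∃ t : Fin n → ℝ, pNorm p' t ≤ 1 ∧ c = pNorm q (fun i => ∑ j, A i j * t j)}

/-- A random vector is log-concave if
`P(Z ∈ λK + (1-λ)L) ≥ P(Z ∈ K)^λ P(Z ∈ L)^(1-λ)` for all compact nonempty `K, L`. -/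
def IsLogConcave {Ω ι : Type*} [MeasurableSpace Ω] [Fintype ι] (P : Measure Ω)
    (Z : Ω → (ι → ℝ)) : Prop :=
  ∀ K L : Set (ι → ℝ), K.Nonempty → L.Nonempty → IsCompact K → IsCompact L →
    ∀ lam : ℝ, lam ∈ Set.Icc (0 : ℝ) 1 →
      P {ω | Z ω ∈ K} ^ lam * P {ω | Z ω ∈ L} ^ (1 - lam) ≤
        P {ω | Z ω ∈ lam • K + (1 - lam) • L}

/-- A random vector is isotropic if it is centred and its covariance matrix is the identity. -/
def IsIsotropic {Ω ι : Type*} [MeasurableSpace Ω] [Fintype ι] [DecidableEq ι] (P : Measure Ω)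
    (Z : Ω → (ι → ℝ)) : Prop :=
  (∀ i, ∫ ω, Z ω i ∂P = 0) ∧
    ∀ i j, ∫ ω, Z ω i * Z ω j ∂P = if i = j then 1 else 0

/-- A random vector is unconditional if flipping the signs of any subset of its coordinates
does not change its distribution. -/
def IsUnconditional {Ω ι : Type*} [MeasurableSpace Ω] [Fintype ι] (P : Measure Ω)
    (Z : Ω → (ι → ℝ)) : Prop :=
  ∀ η : ι → ℝ, (∀ k, η k = 1 ∨ η k = -1) →
    IdentDistrib Z (fun ω k => η k * Z ω k) P P

/-- Membership in the unit ball of the dual norm of `ℓ_p`, i.e. `‖t‖_{p'} ≤ 1` where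
`p'` is the Hölder conjugate of `p` (this also makes sense for `p = 1`, where `p' = ∞`). -/
def inDualBall {ι : Type*} [Fintype ι] (p : ℝ) (t : ι → ℝ) : Prop :=
  ∀ x : ι → ℝ, pNorm p x ≤ 1 → |∑ i, t i * x i| ≤ 1


-- pointwise bound
lemma aux_pointwise {x r : ℝ} (hr : 0 ≤ r) :
    |x| ^ r ≤ (2 * r) ^ (r / 2) * rexp (x ^ 2 / 4) := by
  rcases hr.eq_or_lt with h | hr
  · simp [← h, Real.one_le_exp_iff]
    positivity
  rcases eq_or_ne x 0 with rfl | hx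
  · rw [abs_zero, Real.zero_rpow hr.ne']
    positivity
  have hx2 : (0:ℝ) < x ^ 2 / 4 := by positivity
  have hs : (0:ℝ) < r / 2 := by positivity
  -- key : (u/s)^s ≤ exp u
  have key : ((x ^ 2 / 4) / (r / 2)) ^ (r / 2) ≤ rexp (x ^ 2 / 4) := by
    rw [Real.rpow_def_of_pos (div_pos hx2 hs), Real.exp_le_exp]
    calc Real.log (x ^ 2 / 4 / (r / 2)) * (r / 2)
        ≤ (x ^ 2 / 4 / (r / 2)) * (r / 2) := by
          apply mul_le_mul_of_nonneg_right _ hs.le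
          exact (Real.log_le_sub_one_of_pos (div_pos hx2 hs)).trans (by linarith)
      _ = x ^ 2 / 4 := div_mul_cancel₀ _ hs.ne'
  have h1 : |x| ^ r = (2 * r * ((x ^ 2 / 4) / (r / 2))) ^ (r / 2) := by
    have : 2 * r * (x ^ 2 / 4 / (r / 2)) = x ^ 2 := by field_simp; ring
    rw [this]
    rw [show (x:ℝ) ^ 2 = |x| ^ (2:ℝ) by rw [Real.rpow_two, sq_abs],
      ← Real.rpow_mul (abs_nonneg x)]
    rw [mul_div_cancel₀ _ (two_ne_zero)]
  rw [h1, Real.mul_rpow (by positivity) (by positivity)]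
  exact mul_le_mul_of_nonneg_left key (by positivity)


lemma aux_expmoment :
    ∫⁻ x, ENNReal.ofReal (rexp (x ^ 2 / 4)) ∂(gaussianReal 0 1) ≤ ENNReal.ofReal 2 := by
  rw [gaussianReal_of_var_ne_zero _ one_ne_zero,
    lintegral_withDensity_eq_lintegral_mul _ (measurable_gaussianPDF 0 1)
      (by fun_prop : Measurable fun x : ℝ => ENNReal.ofReal (rexp (x ^ 2 / 4)))]
  have hpt : ∀ x : ℝ, (gaussianPDF 0 1 * fun x => ENNReal.ofReal (rexp (x ^ 2 / 4))) x
      = ENNReal.ofReal ((√(2 * π))⁻¹ * rexp (-(4:ℝ)⁻¹ * x ^ 2)) := by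
    intro x
    simp only [Pi.mul_apply, gaussianPDF, ← ENNReal.ofReal_mul (gaussianPDFReal_pos 0 1 x one_ne_zero).le]
    congr 1
    simp only [gaussianPDFReal, NNReal.coe_one, mul_one, sub_zero]
    rw [mul_assoc, ← Real.exp_add]
    ring_nf
  simp only [hpt]
  have hint : Integrable (fun x : ℝ => (√(2 * π))⁻¹ * rexp (-(4:ℝ)⁻¹ * x ^ 2)) := by
    exact (integrable_exp_neg_mul_sq (by norm_num : (0:ℝ) < 4⁻¹)).const_mul _
  rw [← ofReal_integral_eq_lintegral_ofReal hint
    (Filter.Eventually.of_forall fun x => by positivity)]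
  apply ENNReal.ofReal_le_ofReal
  rw [MeasureTheory.integral_const_mul, integral_gaussian]
  rw [show π / (4:ℝ)⁻¹ = 2 * (2 * π) by ring, Real.sqrt_mul (by norm_num) (2 * π)]
  rw [inv_mul_le_iff₀ (Real.sqrt_pos.2 (by positivity))]
  have h2 : √2 ≤ 2 := by
    nlinarith [Real.sq_sqrt (by norm_num : (0:ℝ) ≤ 2), Real.sqrt_nonneg 2]
  nlinarith [Real.sqrt_nonneg (2*π)]



lemma aux_gauss_moment {r : ℝ} (hr : 0 ≤ r) :
    ∫⁻ x, ENNReal.ofReal |x| ^ r ∂(gaussianReal 0 1) ≤ ENNReal.ofReal (2 * (2 * r) ^ (r / 2)) := by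
  calc ∫⁻ x, ENNReal.ofReal |x| ^ r ∂(gaussianReal 0 1)
      = ∫⁻ x, ENNReal.ofReal (|x| ^ r) ∂(gaussianReal 0 1) := by
        simp_rw [ENNReal.ofReal_rpow_of_nonneg (abs_nonneg _) hr]
    _ ≤ ∫⁻ x, ENNReal.ofReal ((2 * r) ^ (r / 2) * rexp (x ^ 2 / 4)) ∂(gaussianReal 0 1) :=
        lintegral_mono fun x => ENNReal.ofReal_le_ofReal (aux_pointwise hr)
    _ = ENNReal.ofReal ((2 * r) ^ (r / 2)) *
          ∫⁻ x, ENNReal.ofReal (rexp (x ^ 2 / 4)) ∂(gaussianReal 0 1) := by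
        simp_rw [ENNReal.ofReal_mul (by positivity : (0:ℝ) ≤ (2 * r) ^ (r / 2))]
        rw [lintegral_const_mul _ (by fun_prop)]
    _ ≤ ENNReal.ofReal ((2 * r) ^ (r / 2)) * ENNReal.ofReal 2 :=
        mul_le_mul_right aux_expmoment _
    _ = ENNReal.ofReal (2 * (2 * r) ^ (r / 2)) := by
        rw [← ENNReal.ofReal_mul (by positivity), mul_comm]

lemma aux_minkowski {α ι : Type*} [MeasurableSpace α] (μ : Measure α) {r : ℝ} (hr : 1 ≤ r)
    (s : Finset ι) (f : ι → α → ℝ≥0∞) (hf : ∀ j, Measurable (f j)) :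
    (∫⁻ a, (∑ j ∈ s, f j a) ^ r ∂μ) ^ (1 / r) ≤ ∑ j ∈ s, (∫⁻ a, f j a ^ r ∂μ) ^ (1 / r) := by
  classical
  induction s using Finset.induction_on with
  | empty =>
    have hr0 : (0:ℝ) < r := lt_of_lt_of_le zero_lt_one hr
    simp only [Finset.sum_empty, ENNReal.zero_rpow_of_pos hr0, lintegral_zero,
      ENNReal.zero_rpow_of_pos (by positivity : (0:ℝ) < 1 / r)]
    exact le_refl 0
  | @insert a s' ha ih =>
    simp_rw [Finset.sum_insert ha]
    calc (∫⁻ x, (f a x + ∑ j ∈ s', f j x) ^ r ∂μ) ^ (1 / r)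
        ≤ (∫⁻ x, f a x ^ r ∂μ) ^ (1 / r) + (∫⁻ x, (∑ j ∈ s', f j x) ^ r ∂μ) ^ (1 / r) :=
          ENNReal.lintegral_Lp_add_le (hf a).aemeasurable
            (Finset.measurable_sum s' fun j _ => hf j).aemeasurable hr
      _ ≤ _ := add_le_add_right ih _

lemma aux_holder {α : Type*} [MeasurableSpace α] (μ : Measure α) [IsProbabilityMeasure μ]
    {f : α → ℝ≥0∞} (hf : AEMeasurable f μ) {q : ℝ} (hq : 1 < q) :
    ∫⁻ a, f a ^ (1 / q) ∂μ ≤ (∫⁻ a, f a ∂μ) ^ (1 / q) := by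
  have hconj : q.HolderConjugate (Real.conjExponent q) := Real.HolderConjugate.conjExponent hq
  have h := ENNReal.lintegral_mul_le_Lp_mul_Lq μ hconj
    (f := fun a => f a ^ (1 / q)) (g := fun _ => 1)
    (hf.pow_const _) aemeasurable_const
  simpa [← ENNReal.rpow_natCast, ← ENNReal.rpow_mul,
    inv_mul_cancel₀ (lt_of_lt_of_le zero_lt_one hq.le).ne'] using h



lemma aux_sup_le {m : ℕ} [NeZero m] (x : Fin m → ℝ) (hx : ∀ i, 0 ≤ x i) {q : ℝ} (hq : 0 < q) :
    (⨆ i, x i) ≤ (∑ i, x i ^ q) ^ (1 / q) := by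
  apply ciSup_le
  intro i
  have h : x i = (x i ^ q) ^ (1 / q) := by
    rw [← Real.rpow_mul (hx i), mul_one_div_cancel hq.ne', Real.rpow_one]
  rw [h]
  exact Real.rpow_le_rpow (Real.rpow_nonneg (hx i) q)
    (Finset.single_le_sum (f := fun i => x i ^ q) (fun i _ => Real.rpow_nonneg (hx i) q)
      (Finset.mem_univ i)) (by positivity)

theorem statement15 (γ p : ℝ) (hγ : 0 < γ) (hp : max 1 (1 / γ) ≤ p) :
    ∃ C : ℝ, 0 < C ∧
      ∀ (m n : ℕ), 2 ≤ m → 1 ≤ n →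
      ∀ (Ω : Type) [MeasurableSpace Ω] (P : Measure Ω), IsProbabilityMeasure P →
      ∀ G' : Ω → Fin m → Fin n → ℝ, Measurable G' →
        iIndepFun
          (fun ij : Fin m × Fin n => fun ω => G' ω ij.1 ij.2) P →
        (∀ i j, Measure.map (fun ω => G' ω i j) P = gaussianReal 0 1) →
      ∀ B : Fin m → Fin n → ℝ,
        (∫ ω, ⨆ i, (∑ j, |B i j| ^ p * |G' ω i j| ^ (p * γ)) ^ (1 / p) ∂P) ≤
          C * (Real.log m) ^ (γ / 2) * ⨆ i, (∑ j, |B i j| ^ p) ^ (1 / p) := by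
  have hp1 : (1:ℝ) ≤ p := le_trans (le_max_left _ _) hp
  have hp0 : (0:ℝ) < p := lt_of_lt_of_le zero_lt_one hp1
  have hlog2 : (0:ℝ) < Real.log 2 := Real.log_pos one_lt_two
  have hbase : (0:ℝ) < 2 * γ * (p / Real.log 2 + 1) := by positivity
  refine ⟨Real.exp 1 * 2 * (2 * γ * (p / Real.log 2 + 1)) ^ (γ / 2),
    by positivity, ?_⟩
  intro m n hm hn Ω _ P hP G' hG' _ hmap B
  haveI : NeZero m := ⟨by omega⟩
  set C := Real.exp 1 * 2 * (2 * γ * (p / Real.log 2 + 1)) ^ (γ / 2) with hCdef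
  have hm2 : (2:ℝ) ≤ (m:ℝ) := by exact_mod_cast hm
  have hlogm : Real.log 2 ≤ Real.log m := Real.log_le_log two_pos hm2
  have hlogm0 : (0:ℝ) < Real.log m := lt_of_lt_of_le hlog2 hlogm
  set q := p + Real.log m with hqdef
  have hq1 : (1:ℝ) < q := by linarith
  have hq0 : (0:ℝ) < q := by linarith
  set r := q / p with hrdef
  have hr1 : (1:ℝ) ≤ r := (one_le_div hp0).2 (by linarith)
  have hr0 : (0:ℝ) < r := lt_of_lt_of_le zero_lt_one hr1
  have hg : ∀ i j, Measurable fun ω => G' ω i j := fun i j =>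
    (measurable_pi_apply j).comp ((measurable_pi_apply i).comp hG')
  set S : Fin m → Ω → ℝ := fun i ω => ∑ j, |B i j| ^ p * |G' ω i j| ^ (p * γ) with hSdef
  have hS0 : ∀ i ω, 0 ≤ S i ω := fun i ω =>
    Finset.sum_nonneg fun j _ => by positivity
  have hSmeas : ∀ i, Measurable (S i) := by
    intro i
    apply Finset.measurable_sum
    intro j _
    fun_prop
  set M := ⨆ i, (∑ j, |B i j| ^ p) ^ (1 / p) with hMdef
  have hM0 : 0 ≤ M := Real.iSup_nonneg fun i => by positivity
  have hMi : ∀ i, ∑ j, |B i j| ^ p ≤ M ^ p := by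
    intro i
    have h1 : (∑ j, |B i j| ^ p) ^ (1 / p) ≤ M :=
      le_ciSup (f := fun i => (∑ j, |B i j| ^ p) ^ (1 / p)) (Finite.bddAbove_range _) i
    calc ∑ j, |B i j| ^ p = ((∑ j, |B i j| ^ p) ^ (1 / p)) ^ p := by
          rw [← Real.rpow_mul (by positivity), one_div_mul_cancel hp0.ne', Real.rpow_one]
      _ ≤ M ^ p := Real.rpow_le_rpow (by positivity) h1 hp0.le
  -- Gaussian moment bound
  set K := ENNReal.ofReal (2 * (2 * (q * γ)) ^ (q * γ / 2)) with hKdef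
  have hqγ : (0:ℝ) ≤ q * γ := by positivity
  have hmom : ∀ i j, ∫⁻ ω, ENNReal.ofReal |G' ω i j| ^ (q * γ) ∂P ≤ K := by
    intro i j
    have hmeas : Measurable fun x : ℝ => ENNReal.ofReal |x| ^ (q * γ) := by fun_prop
    calc ∫⁻ ω, ENNReal.ofReal |G' ω i j| ^ (q * γ) ∂P
        = ∫⁻ x, ENNReal.ofReal |x| ^ (q * γ) ∂(Measure.map (fun ω => G' ω i j) P) :=
          (lintegral_map hmeas (hg i j)).symm
      _ = ∫⁻ x, ENNReal.ofReal |x| ^ (q * γ) ∂(gaussianReal 0 1) := by rw [hmap i j]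
      _ ≤ K := aux_gauss_moment hqγ
  have erpow : ∀ x : ℝ≥0∞, (x ^ (1 / r)) ^ r = x := fun x => by
    rw [← ENNReal.rpow_mul, one_div_mul_cancel hr0.ne', ENNReal.rpow_one]
  -- per-row moment bound via Minkowski
  have hTi : ∀ i, ∫⁻ ω, ENNReal.ofReal (S i ω) ^ r ∂P ≤ ENNReal.ofReal (M ^ p) ^ r * K := by
    intro i
    set h : Fin n → Ω → ℝ≥0∞ :=
      fun j ω => ENNReal.ofReal (|B i j| ^ p) * ENNReal.ofReal |G' ω i j| ^ (p * γ) with hhdef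
    have hhmeas : ∀ j, Measurable (h j) := by
      intro j
      have := hg i j
      fun_prop
    have hSh : ∀ ω, ENNReal.ofReal (S i ω) = ∑ j, h j ω := by
      intro ω
      simp only [hhdef]
      rw [hSdef, ENNReal.ofReal_sum_of_nonneg (fun j _ => by positivity)]
      refine Finset.sum_congr rfl fun j _ => ?_
      rw [ENNReal.ofReal_mul (by positivity),
        ← ENNReal.ofReal_rpow_of_nonneg (abs_nonneg _) (by positivity),
        ← ENNReal.ofReal_rpow_of_nonneg (abs_nonneg _) (by positivity)]
    have hterm : ∀ j, (∫⁻ ω, h j ω ^ r ∂P) ^ (1 / r) ≤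
        ENNReal.ofReal (|B i j| ^ p) * K ^ (1 / r) := by
      intro j
      have h1 : ∀ ω, h j ω ^ r =
          ENNReal.ofReal (|B i j| ^ p) ^ r * ENNReal.ofReal |G' ω i j| ^ (q * γ) := by
        intro ω
        rw [hhdef, ENNReal.mul_rpow_of_nonneg _ _ hr0.le, ← ENNReal.rpow_mul]
        congr 2
        rw [hrdef]
        field_simp
      simp_rw [h1]
      rw [lintegral_const_mul _ (by have := hg i j; fun_prop)]
      calc (ENNReal.ofReal (|B i j| ^ p) ^ r *
              ∫⁻ ω, ENNReal.ofReal |G' ω i j| ^ (q * γ) ∂P) ^ (1 / r)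
          ≤ (ENNReal.ofReal (|B i j| ^ p) ^ r * K) ^ (1 / r) :=
            ENNReal.rpow_le_rpow (mul_le_mul_right (hmom i j) _) (by positivity)
        _ = ENNReal.ofReal (|B i j| ^ p) * K ^ (1 / r) := by
            rw [ENNReal.mul_rpow_of_nonneg _ _ (by positivity), ← ENNReal.rpow_mul,
              mul_one_div_cancel hr0.ne', ENNReal.rpow_one]
    have hsum : (∫⁻ ω, ENNReal.ofReal (S i ω) ^ r ∂P) ^ (1 / r) ≤
        ENNReal.ofReal (M ^ p) * K ^ (1 / r) := by
      simp_rw [hSh]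
      refine (aux_minkowski P hr1 Finset.univ h hhmeas).trans ?_
      calc ∑ j, (∫⁻ ω, h j ω ^ r ∂P) ^ (1 / r)
          ≤ ∑ j, ENNReal.ofReal (|B i j| ^ p) * K ^ (1 / r) :=
            Finset.sum_le_sum fun j _ => hterm j
        _ = ENNReal.ofReal (∑ j, |B i j| ^ p) * K ^ (1 / r) := by
            rw [ENNReal.ofReal_sum_of_nonneg (fun j _ => by positivity), Finset.sum_mul]
        _ ≤ ENNReal.ofReal (M ^ p) * K ^ (1 / r) :=
            mul_le_mul_left (ENNReal.ofReal_le_ofReal (hMi i)) _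
    calc ∫⁻ ω, ENNReal.ofReal (S i ω) ^ r ∂P
        = ((∫⁻ ω, ENNReal.ofReal (S i ω) ^ r ∂P) ^ (1 / r)) ^ r := (erpow _).symm
      _ ≤ (ENNReal.ofReal (M ^ p) * K ^ (1 / r)) ^ r := ENNReal.rpow_le_rpow hsum hr0.le
      _ = ENNReal.ofReal (M ^ p) ^ r * K := by
          rw [ENNReal.mul_rpow_of_nonneg _ _ hr0.le, erpow]
  -- integrand is F
  set F : Ω → ℝ := fun ω => ⨆ i, (∑ j, |B i j| ^ p * |G' ω i j| ^ (p * γ)) ^ (1 / p) with hFdef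
  have hFS : ∀ ω, F ω = ⨆ i, (S i ω) ^ (1 / p) := fun ω => rfl
  have hF0 : ∀ ω, 0 ≤ F ω := fun ω =>
    Real.iSup_nonneg fun i => Real.rpow_nonneg (Finset.sum_nonneg fun j _ => by positivity) _
  have hFmeas : Measurable F := by
    have heq : F = Finset.univ.sup' Finset.univ_nonempty
        (fun i ω => (S i ω) ^ (1 / p)) := by
      funext ω
      rw [hFS ω, Finset.sup'_apply, Finset.sup'_univ_eq_ciSup]
    rw [heq]
    exact Finset.measurable_sup' _ fun i _ => by have := hSmeas i; fun_prop
  have hTmeas : Measurable fun ω => ∑ i, ENNReal.ofReal (S i ω) ^ r := by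
    apply Finset.measurable_sum
    intro i _
    have := hSmeas i
    fun_prop
  -- pointwise sup bound
  have hstep1 : ∀ ω, ENNReal.ofReal (F ω) ≤ (∑ i, ENNReal.ofReal (S i ω) ^ r) ^ (1 / q) := by
    intro ω
    have h1 : F ω ≤ (∑ i, (S i ω) ^ r) ^ (1 / q) := by
      rw [hFS]
      refine (aux_sup_le (fun i => (S i ω) ^ (1 / p))
        (fun i => Real.rpow_nonneg (hS0 i ω) _) hq0).trans (le_of_eq ?_)
      congr 1
      refine Finset.sum_congr rfl fun i _ => ?_
      rw [← Real.rpow_mul (hS0 i ω)]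
      congr 1
      rw [hrdef]
      field_simp
    calc ENNReal.ofReal (F ω) ≤ ENNReal.ofReal ((∑ i, (S i ω) ^ r) ^ (1 / q)) :=
          ENNReal.ofReal_le_ofReal h1
      _ = (∑ i, ENNReal.ofReal (S i ω) ^ r) ^ (1 / q) := by
          rw [← ENNReal.ofReal_rpow_of_nonneg
            (Finset.sum_nonneg fun i _ => Real.rpow_nonneg (hS0 i ω) r) (by positivity),
            ENNReal.ofReal_sum_of_nonneg (fun i _ => Real.rpow_nonneg (hS0 i ω) r)]
          congr 1
          exact Finset.sum_congr rfl fun i _ =>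
            (ENNReal.ofReal_rpow_of_nonneg (hS0 i ω) hr0.le).symm
  -- factor bounds
  have hf1 : (m : ℝ≥0∞) ^ (1 / q) ≤ ENNReal.ofReal (Real.exp 1) := by
    rw [← ENNReal.ofReal_natCast m,
      ENNReal.ofReal_rpow_of_nonneg (by positivity) (by positivity)]
    apply ENNReal.ofReal_le_ofReal
    rw [Real.rpow_def_of_pos (by positivity : (0:ℝ) < (m:ℝ))]
    apply Real.exp_le_exp.2
    rw [mul_one_div, div_le_one hq0]
    linarith
  have hf2 : ENNReal.ofReal (M ^ p) ^ (r * (1 / q)) = ENNReal.ofReal M := by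
    have hrq : r * (1 / q) = 1 / p := by rw [hrdef]; field_simp
    rw [hrq, ENNReal.ofReal_rpow_of_nonneg (by positivity) (by positivity),
      ← Real.rpow_mul hM0, mul_one_div_cancel hp0.ne', Real.rpow_one]
  have hf3 : K ^ (1 / q) ≤ ENNReal.ofReal (2 * (2 * (q * γ)) ^ (γ / 2)) := by
    rw [hKdef, ENNReal.ofReal_rpow_of_nonneg (by positivity) (by positivity)]
    apply ENNReal.ofReal_le_ofReal
    rw [Real.mul_rpow (by norm_num) (by positivity), ← Real.rpow_mul (by positivity)]
    have he : q * γ / 2 * (1 / q) = γ / 2 := by field_simp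
    rw [he]
    have h2q : (2:ℝ) ^ (1 / q) ≤ 2 := by
      calc (2:ℝ) ^ (1 / q) ≤ 2 ^ (1:ℝ) :=
            Real.rpow_le_rpow_of_exponent_le one_le_two (by rw [div_le_one hq0]; linarith)
        _ = 2 := Real.rpow_one 2
    exact mul_le_mul_of_nonneg_right h2q (by positivity)
  -- the final real comparison
  have hlast : Real.exp 1 * (M * (2 * (2 * (q * γ)) ^ (γ / 2))) ≤
      C * Real.log m ^ (γ / 2) * M := by
    have hq_le : q ≤ (p / Real.log 2 + 1) * Real.log m := by
      have h1 : p / Real.log 2 * Real.log 2 ≤ p / Real.log 2 * Real.log m :=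
        mul_le_mul_of_nonneg_left hlogm (by positivity)
      have h2 : p / Real.log 2 * Real.log 2 = p := by field_simp
      rw [hqdef]
      nlinarith
    have hx : (2 * (q * γ)) ^ (γ / 2) ≤
        (2 * γ * (p / Real.log 2 + 1)) ^ (γ / 2) * Real.log m ^ (γ / 2) := by
      rw [← Real.mul_rpow (by positivity) hlogm0.le]
      apply Real.rpow_le_rpow (by positivity) _ (by positivity)
      nlinarith
    calc Real.exp 1 * (M * (2 * (2 * (q * γ)) ^ (γ / 2)))
        ≤ Real.exp 1 * (M * (2 * ((2 * γ * (p / Real.log 2 + 1)) ^ (γ / 2) *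
            Real.log m ^ (γ / 2)))) := by
          apply mul_le_mul_of_nonneg_left _ (Real.exp_pos 1).le
          apply mul_le_mul_of_nonneg_left _ hM0
          exact mul_le_mul_of_nonneg_left hx (by norm_num)
      _ = C * Real.log m ^ (γ / 2) * M := by rw [hCdef]; ring
  -- main lintegral bound
  have main : ∫⁻ ω, ENNReal.ofReal (F ω) ∂P ≤
      ENNReal.ofReal (C * Real.log m ^ (γ / 2) * M) := by
    calc ∫⁻ ω, ENNReal.ofReal (F ω) ∂P
        ≤ ∫⁻ ω, (∑ i, ENNReal.ofReal (S i ω) ^ r) ^ (1 / q) ∂P := lintegral_mono hstep1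
      _ ≤ (∫⁻ ω, ∑ i, ENNReal.ofReal (S i ω) ^ r ∂P) ^ (1 / q) :=
          aux_holder P hTmeas.aemeasurable hq1
      _ = (∑ i, ∫⁻ ω, ENNReal.ofReal (S i ω) ^ r ∂P) ^ (1 / q) := by
          rw [lintegral_finset_sum _ fun i _ => by have := hSmeas i; fun_prop]
      _ ≤ (∑ _i : Fin m, ENNReal.ofReal (M ^ p) ^ r * K) ^ (1 / q) :=
          ENNReal.rpow_le_rpow (Finset.sum_le_sum fun i _ => hTi i) (by positivity)
      _ = ((m : ℝ≥0∞) * (ENNReal.ofReal (M ^ p) ^ r * K)) ^ (1 / q) := by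
          rw [Finset.sum_const, Finset.card_univ, Fintype.card_fin, nsmul_eq_mul]
      _ = (m : ℝ≥0∞) ^ (1 / q) *
            (ENNReal.ofReal (M ^ p) ^ (r * (1 / q)) * K ^ (1 / q)) := by
          rw [ENNReal.mul_rpow_of_nonneg _ _ (by positivity),
            ENNReal.mul_rpow_of_nonneg _ _ (by positivity), ← ENNReal.rpow_mul]
      _ ≤ ENNReal.ofReal (Real.exp 1) *
            (ENNReal.ofReal M * ENNReal.ofReal (2 * (2 * (q * γ)) ^ (γ / 2))) := by
          rw [hf2]
          exact mul_le_mul' hf1 (mul_le_mul' le_rfl hf3)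
      _ = ENNReal.ofReal (Real.exp 1 * (M * (2 * (2 * (q * γ)) ^ (γ / 2)))) := by
          rw [← ENNReal.ofReal_mul hM0, ← ENNReal.ofReal_mul (Real.exp_pos 1).le]
      _ ≤ ENNReal.ofReal (C * Real.log m ^ (γ / 2) * M) := ENNReal.ofReal_le_ofReal hlast
  -- conclude
  have hRHS0 : 0 ≤ C * Real.log m ^ (γ / 2) * M := by
    apply mul_nonneg (mul_nonneg _ (by positivity)) hM0
    rw [hCdef]
    exact mul_nonneg (by positivity) (Real.rpow_nonneg hbase.le _)
  rw [show (∫ ω, ⨆ i, (∑ j, |B i j| ^ p * |G' ω i j| ^ (p * γ)) ^ (1 / p) ∂P) =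
      ∫ ω, F ω ∂P from rfl,
    integral_eq_lintegral_of_nonneg_ae (ae_of_all _ hF0) hFmeas.aestronglyMeasurable]
  have hfin := ENNReal.toReal_mono ENNReal.ofReal_ne_top main
  rwa [ENNReal.toReal_ofReal hRHS0] at hfin

end
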